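/- Let G be a directed graph in which every vertex is reachable from s, and let P be an (s,t)-path whose suffix P_{v,t} (for some vertex v on P with dist_G(s,v) = p) satisfies: the first 2k edges of P_{v,t} stay within layers L_p, …, L_{p+j2} where j2 ≤ dist_G(s,t) − p, and P_{v,t} later visits a vertex w in layer L_{p+j1} with j1 ≤ k after leaving the first 2k+1 vertices. Then P_{v,t} contains at least k bad edges (edges not corresponding to the first entry of the path into a layer L_i with i ≤ dist_G(s,t)). -/

import Mathlib

variable {V : Type*}

/-- `l` is a (nonempty) directed walk in the digraph `G`. -/
def IsWalk (G : V → V → Prop) : List V → Prop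
  | [] => False
  | [_] => True
  | a :: b :: l => G a b ∧ IsWalk G (b :: l)

/-- `l` is a simple directed path in `G`. -/
def IsPath (G : V → V → Prop) (l : List V) : Prop := IsWalk G l ∧ l.Nodup

/-- `l` is a walk from `s` to `t` in `G`. -/
def IsWalkFrom (G : V → V → Prop) (s t : V) (l : List V) : Prop :=
  IsWalk G l ∧ l.head? = some s ∧ l.getLast? = some t

/-- `l` is a simple path from `s` to `t` in `G`. -/
def IsPathFrom (G : V → V → Prop) (s t : V) (l : List V) : Prop :=
  IsPath G l ∧ l.head? = some s ∧ l.getLast? = some t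

/-- The length (number of edges) of a path given as a vertex list. -/
def pathLen (l : List V) : ℕ := l.length - 1

/-- Directed shortest-path distance (`⊤` if unreachable). -/
noncomputable def ddist (G : V → V → Prop) (s t : V) : ℕ∞ :=
  sInf {n : ℕ∞ | ∃ l, IsPathFrom G s t l ∧ (pathLen l : ℕ∞) = n}

/-- Edge `i` of the path `P` (from its `i`-th to `(i+1)`-st vertex) is *good* if its head is
the first vertex along `P` lying in some layer `L_j` with `1 ≤ j ≤ dist_G(s,t)`. -/
noncomputable def GoodEdge (G : V → V → Prop) (s t : V) (P : List V) (i : ℕ) : Prop :=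
  ∃ j : ℕ, 1 ≤ j ∧ (j : ℕ∞) ≤ ddist G s t ∧ ddist G s (P.getD (i+1) s) = (j : ℕ∞) ∧
    ∀ m ≤ i, ddist G s (P.getD m s) ≠ (j : ℕ∞)


lemma walk_edge (G : V → V → Prop) (x : V) :
    ∀ (l : List V), IsWalk G l → ∀ i, i + 1 < l.length → G (l.getD i x) (l.getD (i+1) x)
  | [], h => by cases h
  | [a], _ => by intro i hi; simp at hi
  | a :: b :: l, h => by
    intro i hi
    rcases h with ⟨hab, hw⟩
    cases i with
    | zero => simpa using hab
    | succ n => exact walk_edge G x (b :: l) hw n (by simpa using hi)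

lemma walk_append_left (G : V → V → Prop) :
    ∀ (l1 l2 : List V), IsWalk G (l1 ++ l2) → l1 ≠ [] → IsWalk G l1
  | [], _, _, h => absurd rfl h
  | [a], l2, _, _ => trivial
  | a :: b :: l, l2, h, _ => by
    rcases h with ⟨hab, hw⟩
    exact ⟨hab, walk_append_left G (b :: l) l2 hw (by simp)⟩

lemma walk_concat (G : V → V → Prop) :
    ∀ (l : List V) (a b : V), IsWalk G l → l.getLast? = some a → G a b → IsWalk G (l ++ [b])
  | [], a, b, h, _, _ => by cases h
  | [c], a, b, _, hl, hab => by
    simp at hl; subst hl; exact ⟨hab, trivial⟩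
  | c :: d :: l, a, b, h, hl, hab => by
    rcases h with ⟨hcd, hw⟩
    refine ⟨hcd, walk_concat G (d :: l) a b hw ?_ hab⟩
    simpa using hl

lemma getD_zero_of_head? {l : List V} {s : V} (h : l.head? = some s) (x : V) :
    l.getD 0 x = s := by
  cases l with
  | nil => simp at h
  | cons a l => simp at h; simp [h]

lemma getD_last_of_getLast? {l : List V} {t : V} (h : l.getLast? = some t) (x : V) :
    l.getD (l.length - 1) x = t := by
  rw [List.getD_eq_getElem?_getD, ← List.getLast?_eq_getElem?, h]; rfl

lemma ddist_realize {G : V → V → Prop} {s w : V} (h : ∃ l, IsPathFrom G s w l) :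
    ∃ l, IsPathFrom G s w l ∧ (pathLen l : ℕ∞) = ddist G s w := by
  have hne : {n : ℕ∞ | ∃ l, IsPathFrom G s w l ∧ (pathLen l : ℕ∞) = n}.Nonempty := by
    obtain ⟨l, hl⟩ := h
    exact ⟨_, l, hl, rfl⟩
  have hmem := csInf_mem hne
  obtain ⟨l, hl, hlen⟩ := hmem
  exact ⟨l, hl, hlen⟩

lemma ddist_le_pathLen {G : V → V → Prop} {s w : V} {l : List V} (h : IsPathFrom G s w l) :
    ddist G s w ≤ (pathLen l : ℕ∞) :=
  sInf_le ⟨l, h, rfl⟩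

lemma ddist_self (G : V → V → Prop) (s : V) : ddist G s s = 0 := by
  refine le_antisymm ?_ (zero_le)
  have : IsPathFrom G s s [s] := ⟨⟨trivial, by simp⟩, by simp, by simp⟩
  simpa [pathLen] using ddist_le_pathLen this

lemma ddist_step {G : V → V → Prop} {s a b : V} (hreach : ∀ w : V, ∃ l, IsPathFrom G s w l)
    (hab : G a b) : ddist G s b ≤ ddist G s a + 1 := by
  obtain ⟨l, hl, hlen⟩ := ddist_realize (hreach a)
  obtain ⟨⟨hwalk, hnd⟩, hhead, hlast⟩ := hl
  have hlne : l ≠ [] := by rintro rfl; simp at hhead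
  by_cases hb : b ∈ l
  · obtain ⟨l1, l2, rfl⟩ := List.append_of_mem hb
    have hassoc : l1 ++ b :: l2 = (l1 ++ [b]) ++ l2 := by simp
    have hpw : IsWalk G (l1 ++ [b]) := by
      refine walk_append_left G _ l2 ?_ (by simp)
      rw [← hassoc]; exact hwalk
    have hpnd : (l1 ++ [b]).Nodup := by
      have : (l1 ++ [b]).Sublist (l1 ++ b :: l2) := by
        rw [hassoc]; exact List.sublist_append_left _ _
      exact this.nodup hnd
    have hphead : (l1 ++ [b]).head? = some s := by
      cases l1 with
      | nil => simpa using hhead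
      | cons c l1' => simpa using hhead
    have hpf : IsPathFrom G s b (l1 ++ [b]) :=
      ⟨⟨hpw, hpnd⟩, hphead, List.getLast?_concat⟩
    have h1 := ddist_le_pathLen hpf
    have hle : pathLen (l1 ++ [b]) ≤ pathLen (l1 ++ b :: l2) := by
      simp [pathLen]
    calc ddist G s b ≤ (pathLen (l1 ++ [b]) : ℕ∞) := h1
      _ ≤ (pathLen (l1 ++ b :: l2) : ℕ∞) := by exact_mod_cast hle
      _ = ddist G s a := hlen
      _ ≤ ddist G s a + 1 := le_self_add
  · have hla : l.getLast? = some a := hlast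
    have hw' : IsWalk G (l ++ [b]) := walk_concat G l a b hwalk hla hab
    have hnd' : (l ++ [b]).Nodup := by
      simp [List.nodup_append, hnd, hb]
      intro a ha hab; exact hb (hab ▸ ha)
    have hhead' : (l ++ [b]).head? = some s := by
      cases l with
      | nil => simp at hhead
      | cons c l' => simpa using hhead
    have hpf : IsPathFrom G s b (l ++ [b]) := ⟨⟨hw', hnd'⟩, hhead', List.getLast?_concat⟩
    have h1 := ddist_le_pathLen hpf
    have hlen' : pathLen (l ++ [b]) = pathLen l + 1 := by
      cases l with
      | nil => exact absurd rfl hlne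
      | cons c l' => simp [pathLen]
    calc ddist G s b ≤ (pathLen (l ++ [b]) : ℕ∞) := h1
      _ = (pathLen l : ℕ∞) + 1 := by rw [hlen']; push_cast; ring
      _ = ddist G s a + 1 := by rw [hlen]

section DD
variable {G : V → V → Prop} {s : V} {dd : V → ℕ}
  (hreach : ∀ w : V, ∃ l, IsPathFrom G s w l)
  (hdd : ∀ w, ddist G s w = (dd w : ℕ∞))

include hreach hdd

lemma dd_step {a b : V} (hab : G a b) : dd b ≤ dd a + 1 := by
  have := ddist_step hreach hab
  rw [hdd, hdd] at this
  exact_mod_cast this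

lemma walk_dd {l : List V} (hw : IsWalk G l) {m n : ℕ} (hmn : m ≤ n) (hn : n < l.length) :
    dd (l.getD n s) ≤ dd (l.getD m s) + (n - m) := by
  induction n, hmn using Nat.le_induction with
  | base => simp
  | succ n hmn ih =>
    have hn' : n < l.length := by omega
    have h1 := dd_step hreach hdd (walk_edge G s l hw n hn)
    have h2 := ih hn'
    omega

lemma walk_ivt {l : List V} (hw : IsWalk G l) :
    ∀ n, n < l.length → ∀ j, dd (l.getD 0 s) ≤ j → j ≤ dd (l.getD n s) →
      ∃ m ≤ n, dd (l.getD m s) = j := by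
  intro n
  induction n with
  | zero => intro hn j h1 h2; exact ⟨0, le_refl _, le_antisymm h1 h2⟩
  | succ n ih =>
    intro hn j h1 h2
    by_cases hc : j ≤ dd (l.getD n s)
    · obtain ⟨m, hm, hmj⟩ := ih (by omega) j h1 hc
      exact ⟨m, by omega, hmj⟩
    · have hstep := dd_step hreach hdd (walk_edge G s l hw n hn)
      exact ⟨n + 1, le_refl _, by omega⟩

end DD

theorem stmt_10 (G : V → V → Prop) (s t v : V) (p k j1 j2 : ℕ)
    (Pre Q : List V)
    (hreach : ∀ w : V, ∃ l, IsPathFrom G s w l)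
    (hPre : IsPathFrom G s v Pre) (hQ : IsPathFrom G v t Q)
    (hP : IsPathFrom G s t (Pre ++ Q.tail))
    (hv : ddist G s v = (p : ℕ∞))
    (hj2 : ((p + j2 : ℕ) : ℕ∞) ≤ ddist G s t)
    (hseg : ∀ i ≤ min (2*k) (pathLen Q),
      (p : ℕ∞) ≤ ddist G s (Q.getD i s) ∧ ddist G s (Q.getD i s) ≤ ((p + j2 : ℕ) : ℕ∞))
    (hj1 : j1 ≤ k)
    (hw : ∃ i : ℕ, 2*k < i ∧ i < Q.length ∧ ddist G s (Q.getD i s) = ((p + j1 : ℕ) : ℕ∞)) :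
    k ≤ {i | i < pathLen Q ∧ ¬ GoodEdge G s t (Pre ++ Q.tail) (pathLen Pre + i)}.ncard := by
  classical
  have hfin : ∀ w : V, ∃ n : ℕ, ddist G s w = (n : ℕ∞) := by
    intro w
    obtain ⟨l, _, hl⟩ := ddist_realize (hreach w)
    exact ⟨pathLen l, hl.symm⟩
  choose dd hdd using hfin
  obtain ⟨⟨hPreW, hPreNd⟩, hPreH, hPreL⟩ := hPre
  obtain ⟨⟨hQW, hQNd⟩, hQH, hQL⟩ := hQ
  have hPreNe : Pre ≠ [] := by rintro rfl; simp at hPreH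
  have hQNe : Q ≠ [] := by rintro rfl; simp at hQH
  have hPreLen : Pre.length = pathLen Pre + 1 := by
    cases Pre with
    | nil => exact absurd rfl hPreNe
    | cons a l => simp [pathLen]
  have hQLen : Q.length = pathLen Q + 1 := by
    cases Q with
    | nil => exact absurd rfl hQNe
    | cons a l => simp [pathLen]
  set base := pathLen Pre with hbase
  set LQ := pathLen Q with hLQdef
  set P := Pre ++ Q.tail with hPdef
  -- dd values
  have hdds : dd s = 0 := by
    have := ddist_self G s; rw [hdd] at this; exact_mod_cast this
  have hddv : dd v = p := by rw [hdd] at hv; exact_mod_cast hv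
  set d := dd t with hddef
  have hpd : p + j2 ≤ d := by rw [hdd t] at hj2; exact_mod_cast hj2
  obtain ⟨i0, hi0k, hi0len, hi0d⟩ := hw
  have hi0dd : dd (Q.getD i0 s) = p + j1 := by
    rw [hdd] at hi0d; exact_mod_cast hi0d
  have hQ0 : Q.getD 0 s = v := getD_zero_of_head? hQH s
  have hQlast : Q.getD LQ s = t := by
    have := getD_last_of_getLast? hQL s
    rwa [show Q.length - 1 = LQ by omega] at this
  have hPre0 : Pre.getD 0 s = s := getD_zero_of_head? hPreH s
  have hPrelast : Pre.getD base s = v := by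
    have := getD_last_of_getLast? hPreL s
    rwa [show Pre.length - 1 = base by omega] at this
  -- key inequality
  have hi0LQ : i0 ≤ LQ := by omega
  have hchain : dd (Q.getD LQ s) ≤ dd (Q.getD i0 s) + (LQ - i0) :=
    walk_dd hreach hdd hQW hi0LQ (by omega)
  rw [hQlast, hi0dd] at hchain
  have hkey : d + k + 1 ≤ p + LQ := by omega
  -- correspondence between P and Q indices
  have hPQ : ∀ i, i ≤ LQ → P.getD (base + i) s = Q.getD i s := by
    intro i hi
    cases i with
    | zero =>
      rw [hPdef, List.getD_append _ _ _ _ (by omega)]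
      rw [show base + 0 = base from rfl, hPrelast, hQ0]
    | succ n =>
      rw [hPdef, List.getD_append_right _ _ _ _ (by omega)]
      rw [show base + (n+1) - Pre.length = n by omega]
      cases Q with
      | nil => exact absurd rfl hQNe
      | cons a l => simp
  -- layers 0..p are all visited within Pre
  have hPreIVT : ∀ j ≤ p, ∃ m ≤ base, dd (Pre.getD m s) = j := by
    intro j hj
    exact walk_ivt hreach hdd hPreW base (by omega) j
      (by rw [hPre0, hdds]; omega) (by rw [hPrelast, hddv]; exact hj)
  -- finset counting
  set goodF := (Finset.range LQ).filter (fun i => GoodEdge G s t P (base + i)) with hgoodF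
  set badF := (Finset.range LQ).filter (fun i => ¬ GoodEdge G s t P (base + i)) with hbadF
  have hset : {i | i < LQ ∧ ¬ GoodEdge G s t P (base + i)} = ↑badF := by
    ext i; simp [hbadF]
  rw [hset, Set.ncard_coe_finset]
  have hcards : goodF.card + badF.card = LQ := by
    rw [hgoodF, hbadF, Finset.card_filter_add_card_filter_not, Finset.card_range]
  -- every good edge determines a fresh layer in [p+1, d]
  have hlayer : ∀ i ∈ goodF, ∀ j : ℕ, 1 ≤ j → (j : ℕ∞) ≤ ddist G s t →
      ddist G s (P.getD (base + i + 1) s) = (j : ℕ∞) →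
      (∀ m ≤ base + i, ddist G s (P.getD m s) ≠ (j : ℕ∞)) →
      dd (Q.getD (i+1) s) = j ∧ p + 1 ≤ j ∧ j ≤ d := by
    intro i hi j hj1' hjle hhead hall
    simp only [hgoodF, Finset.mem_filter, Finset.mem_range] at hi
    have hiLQ : i < LQ := hi.1
    have heq : P.getD (base + i + 1) s = Q.getD (i+1) s := by
      rw [show base + i + 1 = base + (i+1) from rfl]
      exact hPQ (i+1) (by omega)
    rw [heq, hdd] at hhead
    have hji : dd (Q.getD (i+1) s) = j := by exact_mod_cast hhead
    refine ⟨hji, ?_, ?_⟩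
    · by_contra hc
      have hjp : j ≤ p := by omega
      obtain ⟨m, hm, hmj⟩ := hPreIVT j hjp
      have hPm : P.getD m s = Pre.getD m s := by
        rw [hPdef, List.getD_append _ _ _ _ (by omega)]
      exact hall m (by omega) (by rw [hPm, hdd, hmj])
    · rw [hdd t] at hjle; exact_mod_cast hjle
  have hmaps : ∀ i ∈ goodF, dd (Q.getD (i+1) s) ∈ Finset.Icc (p+1) d := by
    intro i hi
    have hig : GoodEdge G s t P (base + i) := by
      simp only [hgoodF, Finset.mem_filter] at hi; exact hi.2
    obtain ⟨j, hj1', hjle, hhead, hall⟩ := hig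
    obtain ⟨hji, hlo, hhi⟩ := hlayer i hi j hj1' hjle hhead hall
    rw [hji]
    exact Finset.mem_Icc.mpr ⟨hlo, hhi⟩
  have hinj : Set.InjOn (fun i => dd (Q.getD (i+1) s)) ↑goodF := by
    intro i hi i' hi' hff
    simp only [Finset.coe_filter, Set.mem_setOf_eq, hgoodF, Finset.mem_coe,
      Finset.mem_filter, Finset.mem_range] at hi hi'
    by_contra hne
    -- wlog i < i'
    have key : ∀ a b : ℕ, a < b → b < LQ → GoodEdge G s t P (base + a) →
        GoodEdge G s t P (base + b) →
        dd (Q.getD (a+1) s) = dd (Q.getD (b+1) s) → False := by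
      intro a b hab hbLQ hga hgb hfab
      obtain ⟨j, hj1', hjle, hhead, hall⟩ := hga
      obtain ⟨j', hj1'', hjle', hhead', hall'⟩ := hgb
      have hja := hlayer a (by simp [hgoodF, Finset.mem_filter, Finset.mem_range]; exact ⟨by omega, j, hj1', hjle, hhead, hall⟩) j hj1' hjle hhead hall
      have hjb := hlayer b (by simp [hgoodF, Finset.mem_filter, Finset.mem_range]; exact ⟨hbLQ, j', hj1'', hjle', hhead', hall'⟩) j' hj1'' hjle' hhead' hall'
      have hjj : j = j' := by
        rw [← hja.1, ← hjb.1]; exact hfab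
      have hPa : P.getD (base + a + 1) s = Q.getD (a+1) s := by
        rw [show base + a + 1 = base + (a+1) from rfl]
        exact hPQ (a+1) (by omega)
      refine hall' (base + a + 1) (by omega) ?_
      rw [hPa, hdd, hja.1, hjj]
    rcases Nat.lt_or_ge i i' with h | h
    · exact key i i' h hi'.1 hi.2 hi'.2 hff
    · have h' : i' < i := by omega
      exact key i' i h' hi.1 hi'.2 hi.2 hff.symm
  have hcard_good : goodF.card ≤ d - p := by
    have h := Finset.card_le_card_of_injOn _ hmaps hinj
    rw [Nat.card_Icc] at h
    omega
  omega
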